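/- arXiv:2009.10439 — 5 statements merged into one kernel-verified Lean document; each statement's English description precedes it below -/
import Mathlib

section
/- The number of permutations in S_n that avoid the pattern 231 equals the Catalan number C_n = (1/(n+1)) * binom(2n, n). -/
open List

def Contains231 (l : List ℕ) : Prop :=
  ∃ i1 i2 i3 : ℕ, i1 < i2 ∧ i2 < i3 ∧ i3 < l.length ∧
    l.getD i3 0 < l.getD i1 0 ∧ l.getD i1 0 < l.getD i2 0

noncomputable def avF (l : List ℕ) : Finset (List ℕ) :=
  @Finset.filter _ (fun π => ¬ Contains231 π) (Classical.decPred _) l.permutations.toFinset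

lemma mem_avF {l π : List ℕ} : π ∈ avF l ↔ π.Perm l ∧ ¬ Contains231 π := by
  classical
  simp [avF, List.mem_permutations]

lemma card_subtype (l : List ℕ) :
    Nat.card {π : List ℕ // π.Perm l ∧ ¬ Contains231 π} = (avF l).card := by
  rw [← Nat.card_eq_finsetCard]
  exact Nat.card_congr (Equiv.subtypeEquivRight (fun π => by rw [mem_avF])).symm

-- value of (α ++ m :: β) at an index
lemma getD_trich (α β : List ℕ) (m : ℕ) (i : ℕ) :
    (i < α.length → (α ++ m :: β).getD i 0 = α.getD i 0) ∧
    ((α ++ m :: β).getD α.length 0 = m) ∧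
    (α.length < i → (α ++ m :: β).getD i 0 = β.getD (i - α.length - 1) 0) := by
  refine ⟨fun h => List.getD_append _ _ _ _ h, ?_, fun h => ?_⟩
  · rw [List.getD_append_right _ _ _ _ le_rfl, Nat.sub_self]; rfl
  · rw [List.getD_append_right _ _ _ _ h.le]
    have h1 : i - α.length = (i - α.length - 1) + 1 := by omega
    rw [h1, List.getD_cons_succ]
    simp

lemma getD_mem {l : List ℕ} {i : ℕ} (h : i < l.length) : l.getD i 0 ∈ l := by
  rw [List.getD_eq_getElem _ _ h]; exact List.getElem_mem h

lemma contains_of_prefix {l r : List ℕ} (h : Contains231 l) : Contains231 (l ++ r) := by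
  obtain ⟨i1, i2, i3, h12, h23, h3, hv1, hv2⟩ := h
  have h1 : i1 < l.length := by omega
  have h2 : i2 < l.length := by omega
  refine ⟨i1, i2, i3, h12, h23, ?_, ?_, ?_⟩
  · simp only [List.length_append]; omega
  · rwa [List.getD_append _ _ _ _ h3, List.getD_append _ _ _ _ h1]
  · rwa [List.getD_append _ _ _ _ h1, List.getD_append _ _ _ _ h2]

lemma contains_of_suffix {l r : List ℕ} (h : Contains231 r) : Contains231 (l ++ r) := by
  obtain ⟨i1, i2, i3, h12, h23, h3, hv1, hv2⟩ := h
  refine ⟨l.length + i1, l.length + i2, l.length + i3, by omega, by omega, ?_, ?_, ?_⟩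
  · simp only [List.length_append]; omega
  · rwa [List.getD_append_right _ _ _ _ (by omega), List.getD_append_right _ _ _ _ (by omega),
      Nat.add_sub_cancel_left, Nat.add_sub_cancel_left]
  · rwa [List.getD_append_right _ _ _ _ (by omega), List.getD_append_right _ _ _ _ (by omega),
      Nat.add_sub_cancel_left, Nat.add_sub_cancel_left]

lemma not_contains_glue {α β : List ℕ} {m : ℕ}
    (hmα : ∀ a ∈ α, a < m) (hmβ : ∀ b ∈ β, b < m)
    (hαβ : ∀ a ∈ α, ∀ b ∈ β, a < b)
    (hα : ¬ Contains231 α) (hβ : ¬ Contains231 β) :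
    ¬ Contains231 (α ++ m :: β) := by
  rintro ⟨i1, i2, i3, h12, h23, h3, hv1, hv2⟩
  set L := α ++ m :: β with hL
  have hlen : L.length = α.length + β.length + 1 := by simp [hL]; omega
  set a := α.length with ha
  -- helper to know values
  have val : ∀ i, i < L.length →
      (i < a ∧ L.getD i 0 ∈ α) ∨ (i = a ∧ L.getD i 0 = m) ∨
      (a < i ∧ i - a - 1 < β.length ∧ L.getD i 0 = β.getD (i - a - 1) 0 ∧ L.getD i 0 ∈ β) := by
    intro i hi
    rcases lt_trichotomy i a with h | h | h
    · exact Or.inl ⟨h, by rw [(getD_trich α β m i).1 h]; exact getD_mem h⟩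
    · exact Or.inr (Or.inl ⟨h, by rw [h, (getD_trich α β m i).2.1]⟩)
    · refine Or.inr (Or.inr ⟨h, by omega, (getD_trich α β m i).2.2 h, ?_⟩)
      rw [(getD_trich α β m i).2.2 h]
      exact getD_mem (by omega)
  have h1L : i1 < L.length := by omega
  have h2L : i2 < L.length := by omega
  rcases val i1 h1L with ⟨hi1, hm1⟩ | ⟨hi1, hm1⟩ | ⟨hi1, hb1, he1, hm1⟩
  · -- i1 in α
    rcases val i3 h3 with ⟨hi3, hm3⟩ | ⟨hi3, hm3⟩ | ⟨hi3, hb3, he3, hm3⟩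
    · -- all three in α
      have hi2 : i2 < a := by omega
      exact hα ⟨i1, i2, i3, h12, h23, hi3, by
        rwa [(getD_trich α β m i1).1 hi1, (getD_trich α β m i3).1 hi3] at hv1, by
        rwa [(getD_trich α β m i1).1 hi1, (getD_trich α β m i2).1 hi2] at hv2⟩
    · -- i3 is center : L i3 = m > L i1, contradiction with hv1
      exact absurd hv1 (by rw [hm3]; exact not_lt.2 (hmα _ hm1).le)
    · -- i3 in β : L i3 > L i1
      exact absurd hv1 (not_lt.2 (hαβ _ hm1 _ hm3).le)
  · -- i1 is center : L i1 = m maximal, contradicts hv2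
    have h2 : a < i2 := by omega
    rcases val i2 h2L with ⟨hi2, _⟩ | ⟨hi2, _⟩ | ⟨_, _, _, hm2⟩
    · omega
    · omega
    · exact absurd hv2 (by rw [hm1]; exact not_lt.2 (hmβ _ hm2).le)
  · -- i1 in β : all of i2 i3 in β
    rcases val i2 h2L with ⟨hi2, _⟩ | ⟨hi2, _⟩ | ⟨hi2, hb2, he2, hm2⟩
    · omega
    · omega
    rcases val i3 h3 with ⟨hi3, _⟩ | ⟨hi3, _⟩ | ⟨hi3, hb3, he3, hm3⟩
    · omega
    · omega
    exact hβ ⟨i1 - a - 1, i2 - a - 1, i3 - a - 1, by omega, by omega, hb3, by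
      rwa [he1, he3] at hv1, by rwa [he1, he2] at hv2⟩

lemma mem_iff_getD {l : List ℕ} {a : ℕ} : a ∈ l ↔ ∃ i, i < l.length ∧ l.getD i 0 = a := by
  rw [List.mem_iff_getElem]
  constructor
  · rintro ⟨i, hi, rfl⟩; exact ⟨i, hi, List.getD_eq_getElem _ _ hi⟩
  · rintro ⟨i, hi, he⟩; exact ⟨i, hi, by rwa [List.getD_eq_getElem _ _ hi] at he⟩

lemma nodup_getD_inj {l : List ℕ} (h : l.Nodup) {i j : ℕ} (hi : i < l.length)
    (hj : j < l.length) (he : l.getD i 0 = l.getD j 0) : i = j := by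
  rw [List.getD_eq_getElem _ _ hi, List.getD_eq_getElem _ _ hj] at he
  exact (h.getElem_inj_iff).1 he

lemma split_spec {n : ℕ} {π : List ℕ} (hperm : π.Perm (List.range' 1 (n+1)))
    (hav : ¬ Contains231 π) :
    π.idxOf (n+1) ≤ n ∧
    π = π.take (π.idxOf (n+1)) ++ (n+1) :: π.drop (π.idxOf (n+1) + 1) ∧
    (π.take (π.idxOf (n+1))).Perm (List.range' 1 (π.idxOf (n+1))) ∧
    (π.drop (π.idxOf (n+1) + 1)).Perm
      (List.range' (π.idxOf (n+1) + 1) (n - π.idxOf (n+1))) ∧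
    ¬ Contains231 (π.take (π.idxOf (n+1))) ∧
    ¬ Contains231 (π.drop (π.idxOf (n+1) + 1)) := by
  have hmem : n + 1 ∈ π := hperm.mem_iff.2 (List.mem_range'_1.2 ⟨by omega, by omega⟩)
  set p := π.idxOf (n+1) with hpdef
  have hp : p < π.length := List.idxOf_lt_length_iff.2 hmem
  have hlen : π.length = n + 1 := by rw [hperm.length_eq, List.length_range']
  set α := π.take p with hα
  set β := π.drop (p+1) with hβ
  have heq : π = α ++ (n+1) :: β := by
    conv_lhs => rw [← List.take_append_drop p π]
    rw [List.drop_eq_getElem_cons hp, List.getElem_idxOf hp]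
  have hnd : π.Nodup := hperm.nodup_iff.2 (List.nodup_range' (s := 1) (n := n+1))
  have hαlen : α.length = p := by rw [hα, List.length_take]; omega
  have hβlen : β.length = n - p := by rw [hβ, List.length_drop]; omega
  have hpn : p ≤ n := by omega
  have hmemπ : ∀ x ∈ π, 1 ≤ x ∧ x < n + 2 := by
    intro x hx
    have := List.mem_range'_1.1 (hperm.mem_iff.1 hx)
    omega
  have hval1 : ∀ i, i < p → π.getD i 0 = α.getD i 0 := by
    intro i hi
    rw [heq]
    exact (getD_trich α β (n+1) i).1 (by omega)
  have hvalp : π.getD p 0 = n + 1 := by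
    rw [heq]
    have := (getD_trich α β (n+1) α.length).2.1
    rwa [hαlen] at this
  have hval3 : ∀ j, j < β.length → π.getD (p+1+j) 0 = β.getD j 0 := by
    intro j hj
    rw [heq]
    have := (getD_trich α β (n+1) (p+1+j)).2.2 (by omega)
    rw [this]
    congr 1
    omega
  have hαsub : α ⊆ π := (List.take_sublist p π).subset
  have hβsub : β ⊆ π := (List.drop_sublist (p+1) π).subset
  have hnotα : n + 1 ∉ α := by
    intro hx
    obtain ⟨i, hi, hia⟩ := mem_iff_getD.1 hx
    rw [hαlen] at hi
    have : π.getD i 0 = π.getD p 0 := by rw [hval1 i hi, hvalp, hia]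
    have := nodup_getD_inj hnd (by omega) hp this
    omega
  have hcross : ∀ a ∈ α, ∀ b ∈ β, a < b := by
    intro a ha b hb
    obtain ⟨i, hi, hia⟩ := mem_iff_getD.1 ha
    obtain ⟨j, hj, hjb⟩ := mem_iff_getD.1 hb
    rw [hαlen] at hi
    have hiv : π.getD i 0 = a := by rw [hval1 i hi, hia]
    have hjv : π.getD (p+1+j) 0 = b := by rw [hval3 j hj, hjb]
    by_contra hab
    push_neg at hab
    have hne : b ≠ a := by
      intro hba
      have : π.getD (p+1+j) 0 = π.getD i 0 := by rw [hiv, hjv, hba]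
      have := nodup_getD_inj hnd (by omega) (by omega) this
      omega
    have hba : b < a := lt_of_le_of_ne hab hne
    have haub : a < n + 1 := by
      have h1 := hmemπ a (hαsub ha)
      have h2 : a ≠ n + 1 := fun h => hnotα (h ▸ ha)
      omega
    exact hav ⟨i, p, p + 1 + j, by omega, by omega, by omega,
      by rw [hiv, hjv]; exact hba, by rw [hiv, hvalp]; exact haub⟩
  have hub : ∀ x ∈ α, x ≤ p := by
    intro x hx
    by_contra h
    push_neg at h
    have hxn : x ≤ n := by
      have := hmemπ x (hαsub hx)
      have : x ≠ n + 1 := fun hh => hnotα (hh ▸ hx)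
      omega
    have hsub : List.range' 1 x ⊆ α := by
      intro y hy
      obtain ⟨hy1, hy2⟩ := List.mem_range'_1.1 hy
      have hyπ : y ∈ π := hperm.mem_iff.2 (List.mem_range'_1.2 ⟨hy1, by omega⟩)
      rw [heq] at hyπ
      rcases List.mem_append.1 hyπ with hyα | hyc
      · exact hyα
      rcases List.mem_cons.1 hyc with hyc | hyβ
      · omega
      · have := hcross x hx y hyβ; omega
    have := (List.subperm_of_subset (List.nodup_range' (s := 1) (n := x)) hsub).length_le
    rw [List.length_range'] at this
    omega
  have hndα : α.Nodup := (List.take_sublist p π).nodup hnd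
  have hαperm : α.Perm (List.range' 1 p) := by
    have hsub : α ⊆ List.range' 1 p := by
      intro x hx
      have := hmemπ x (hαsub hx)
      exact List.mem_range'_1.2 ⟨this.1, by have := hub x hx; omega⟩
    exact (List.subperm_of_subset hndα hsub).perm_of_length_le
      (by rw [List.length_range', hαlen])
  have hβperm : β.Perm (List.range' (p+1) (n-p)) := by
    have h1 : List.range' (p+1) (n-p) ++ List.range' (n+1) 1 = List.range' (p+1) (n+1-p) := by
      have := List.range'_append (s := p+1) (m := n-p) (n := 1) (step := 1)
      rw [show p + 1 + 1 * (n - p) = n + 1 by omega] at this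
      rw [this]
      congr 1
      omega
    have h2 : List.range' 1 p ++ List.range' (p+1) (n+1-p) = List.range' 1 (n+1) := by
      have := List.range'_append (s := 1) (m := p) (n := n+1-p) (step := 1)
      rw [show 1 + 1 * p = p + 1 by omega] at this
      rw [this]
      congr 1
      omega
    have hsplit : (List.range' 1 (n+1) : List ℕ)
        = List.range' 1 p ++ (List.range' (p+1) (n-p) ++ [n+1]) := by
      rw [← h2, ← h1, List.range'_one]
    have hbig : (α ++ ((n+1) :: β)).Perm
        (List.range' 1 p ++ (List.range' (p+1) (n-p) ++ [n+1])) := by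
      rw [← heq, ← hsplit]; exact hperm
    have hbig2 : (List.range' 1 p ++ ((n+1) :: β)).Perm
        (List.range' 1 p ++ (List.range' (p+1) (n-p) ++ [n+1])) :=
      ((hαperm.symm.append_right ((n+1) :: β)).trans hbig)
    have h3 := (List.perm_append_left_iff _).1 hbig2
    have h4 : ((n+1) :: β).Perm ((n+1) :: List.range' (p+1) (n-p)) :=
      h3.trans (List.perm_append_singleton _ _)
    exact h4.cons_inv
  refine ⟨hpn, heq, hαperm, hβperm, ?_, ?_⟩
  · intro h
    exact hav (heq ▸ contains_of_prefix h)
  · intro h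
    apply hav
    rw [heq, show α ++ (n+1) :: β = (α ++ [n+1]) ++ β by simp]
    exact contains_of_suffix h

lemma contains_map_add_iff (d : ℕ) (l : List ℕ) :
    Contains231 (l.map (fun x => d + x)) ↔ Contains231 l := by
  have hlen : (l.map (fun x => d + x)).length = l.length := by simp
  have hval : ∀ i, i < l.length → (l.map (fun x => d + x)).getD i 0 = d + l.getD i 0 := by
    intro i hi
    rw [List.getD_eq_getElem _ _ (by omega), List.getD_eq_getElem _ _ hi, List.getElem_map]
  constructor
  · rintro ⟨i1, i2, i3, h12, h23, h3, hv1, hv2⟩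
    rw [hlen] at h3
    rw [hval i3 h3, hval i1 (by omega)] at hv1
    rw [hval i1 (by omega), hval i2 (by omega)] at hv2
    exact ⟨i1, i2, i3, h12, h23, h3, by omega, by omega⟩
  · rintro ⟨i1, i2, i3, h12, h23, h3, hv1, hv2⟩
    exact ⟨i1, i2, i3, h12, h23, by omega, by
      rw [hval i3 h3, hval i1 (by omega)]; omega, by
      rw [hval i1 (by omega), hval i2 (by omega)]; omega⟩

lemma add_sub_cancel_map (d : ℕ) (π : List ℕ) :
    (π.map (fun x => d + x)).map (fun x => x - d) = π := by
  rw [List.map_map]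
  refine (List.map_congr_left ?_).trans (List.map_id π)
  intro a _
  simp only [Function.comp_apply, id_eq]
  omega

lemma sub_add_cancel_map {d : ℕ} {π : List ℕ} (hd : ∀ x ∈ π, d + 1 ≤ x) :
    (π.map (fun x => x - d)).map (fun x => d + x) = π := by
  rw [List.map_map]
  refine (List.map_congr_left ?_).trans (List.map_id π)
  intro a ha
  have := hd a ha
  simp only [Function.comp_apply, id_eq]
  omega

lemma card_avF_shift (d m : ℕ) :
    (avF (List.range' (d+1) m)).card = (avF (List.range' 1 m)).card := by
  have hr : (List.range' 1 m).map (fun x => d + x) = List.range' (d+1) m := by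
    rw [List.map_add_range']
  refine Finset.card_bij' (fun π _ => π.map (fun x => x - d))
    (fun π _ => π.map (fun x => d + x)) ?_ ?_ ?_ ?_
  · intro π hπ
    obtain ⟨hperm, hav⟩ := mem_avF.1 hπ
    have hd : ∀ x ∈ π, d + 1 ≤ x := fun x hx =>
      (List.mem_range'_1.1 (hperm.mem_iff.1 hx)).1
    refine mem_avF.2 ⟨?_, ?_⟩
    · have h1 : (π.map (fun x => x - d)).Perm ((List.range' (d+1) m).map (fun x => x - d)) :=
        hperm.map _
      rwa [← hr, add_sub_cancel_map] at h1
    · intro hc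
      rw [← contains_map_add_iff d, sub_add_cancel_map hd] at hc
      exact hav hc
  · intro π hπ
    obtain ⟨hperm, hav⟩ := mem_avF.1 hπ
    refine mem_avF.2 ⟨hr ▸ hperm.map _, ?_⟩
    rwa [contains_map_add_iff]
  · intro π hπ
    obtain ⟨hperm, _⟩ := mem_avF.1 hπ
    have hd : ∀ x ∈ π, d + 1 ≤ x := fun x hx =>
      (List.mem_range'_1.1 (hperm.mem_iff.1 hx)).1
    exact sub_add_cancel_map hd
  · intro π _
    exact add_sub_cancel_map d π

lemma range'_split (n k : ℕ) (hk : k ≤ n) :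
    (List.range' 1 (n+1) : List ℕ)
      = List.range' 1 k ++ (List.range' (k+1) (n-k) ++ [n+1]) := by
  have h1 : List.range' (k+1) (n-k) ++ List.range' (n+1) 1 = List.range' (k+1) (n+1-k) := by
    have := List.range'_append (s := k+1) (m := n-k) (n := 1) (step := 1)
    rw [show k + 1 + 1 * (n - k) = n + 1 by omega] at this
    rw [this]
    congr 1
    omega
  have h2 : List.range' 1 k ++ List.range' (k+1) (n+1-k) = List.range' 1 (n+1) := by
    have := List.range'_append (s := 1) (m := k) (n := n+1-k) (step := 1)
    rw [show 1 + 1 * k = k + 1 by omega] at this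
    rw [this]
    congr 1
    omega
  rw [← h2, ← h1, List.range'_one]

lemma card_rec (n : ℕ) :
    (avF (List.range' 1 (n+1))).card
      = ∑ k ∈ Finset.range (n+1),
          (avF (List.range' 1 k)).card * (avF (List.range' 1 (n-k))).card := by
  have hT : (avF (List.range' 1 (n+1))).card
      = ((Finset.range (n+1)).sigma
          (fun k => avF (List.range' 1 k) ×ˢ avF (List.range' (k+1) (n-k)))).card := by
    refine Finset.card_bij'
      (fun π _ => (⟨π.idxOf (n+1), (π.take (π.idxOf (n+1)), π.drop (π.idxOf (n+1) + 1))⟩ :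
        (_ : ℕ) × List ℕ × List ℕ))
      (fun q _ => q.2.1 ++ (n+1) :: q.2.2) ?_ ?_ ?_ ?_
    · intro π hπ
      obtain ⟨hperm, hav⟩ := mem_avF.1 hπ
      obtain ⟨hpn, _, hα, hβ, havα, havβ⟩ := split_spec hperm hav
      refine Finset.mem_sigma.2 ⟨Finset.mem_range.2 ?_, Finset.mem_product.2 ⟨?_, ?_⟩⟩
      · dsimp only; omega
      · exact mem_avF.2 ⟨hα, havα⟩
      · exact mem_avF.2 ⟨hβ, havβ⟩
    · rintro ⟨k, α, β⟩ hq
      obtain ⟨hk, hprod⟩ := Finset.mem_sigma.1 hq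
      rw [Finset.mem_range] at hk
      dsimp only at hk hprod
      have hk' : k ≤ n := by omega
      obtain ⟨hαm, hβm⟩ := Finset.mem_product.1 hprod
      obtain ⟨hαperm, hαav⟩ := mem_avF.1 hαm
      obtain ⟨hβperm, hβav⟩ := mem_avF.1 hβm
      dsimp only
      have hαval : ∀ a ∈ α, 1 ≤ a ∧ a ≤ k := by
        intro a ha
        have := List.mem_range'_1.1 (hαperm.mem_iff.1 ha)
        omega
      have hβval : ∀ b ∈ β, k + 1 ≤ b ∧ b ≤ n := by
        intro b hb
        have := List.mem_range'_1.1 (hβperm.mem_iff.1 hb)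
        omega
      refine mem_avF.2 ⟨?_, ?_⟩
      · rw [range'_split n k hk']
        refine (hαperm.append ?_)
        refine List.Perm.trans (List.Perm.cons _ hβperm) ?_
        exact (List.perm_append_singleton _ _).symm
      · exact not_contains_glue (fun a ha => by have := hαval a ha; omega)
          (fun b hb => by have := hβval b hb; omega)
          (fun a ha b hb => by have := hαval a ha; have := hβval b hb; omega)
          hαav hβav
    · intro π hπ
      obtain ⟨hperm, hav⟩ := mem_avF.1 hπ
      obtain ⟨_, heq, _, _, _, _⟩ := split_spec hperm hav
      exact heq.symm
    · rintro ⟨k, α, β⟩ hq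
      obtain ⟨hk, hprod⟩ := Finset.mem_sigma.1 hq
      rw [Finset.mem_range] at hk
      dsimp only at hk hprod
      obtain ⟨hαm, hβm⟩ := Finset.mem_product.1 hprod
      obtain ⟨hαperm, _⟩ := mem_avF.1 hαm
      have hklen : α.length = k := by rw [hαperm.length_eq, List.length_range']
      have hnot : (n+1) ∉ α := by
        intro h
        have := List.mem_range'_1.1 (hαperm.mem_iff.1 h)
        omega
      have hidx : (α ++ (n+1) :: β).idxOf (n+1) = α.length := by
        rw [List.idxOf_append_of_notMem hnot, List.idxOf_cons_self]
        omega
      dsimp only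
      have htake : (α ++ (n+1) :: β).take α.length = α := List.take_left
      have hdrop : (α ++ (n+1) :: β).drop (α.length + 1) = β := by
        rw [← List.drop_drop, List.drop_left]
        rfl
      rw [hidx, htake, hdrop, hklen]
  rw [hT, Finset.card_sigma]
  refine Finset.sum_congr rfl fun k hk => ?_
  rw [Finset.card_product, card_avF_shift k (n-k)]

lemma card_avF_eq_catalan (n : ℕ) : (avF (List.range' 1 n)).card = catalan n := by
  induction n using Nat.strong_induction_on with
  | _ n ih =>
    match n with
    | 0 =>
      have hav : ¬ Contains231 ([] : List ℕ) := by
        rintro ⟨i1, i2, i3, _, _, h3, _, _⟩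
        simp at h3
      have : avF (List.range' 1 0) = {([] : List ℕ)} := by
        ext π
        rw [mem_avF]
        simp only [List.range'_zero, Finset.mem_singleton]
        constructor
        · rintro ⟨hp, _⟩
          exact List.Perm.eq_nil hp
        · rintro rfl
          exact ⟨List.Perm.refl _, hav⟩
      rw [this]
      simp [catalan]
    | n + 1 =>
      have h := Fin.sum_univ_eq_sum_range (fun i => catalan i * catalan (n - i)) (n+1)
      rw [card_rec n, catalan_succ, h]
      refine Finset.sum_congr rfl fun k hk => ?_
      rw [Finset.mem_range] at hk
      rw [ih k (by omega), ih (n - k) (by omega)]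

/-- The number of permutations in `S_n` avoiding the pattern 231 equals the
Catalan number `C_n = binom(2n, n)/(n+1)`. -/
theorem stmt1 (n : ℕ) :
    (n + 1) * Nat.card {π : List ℕ // List.Perm π (List.range' 1 n) ∧ ¬ Contains231 π}
      = Nat.choose (2 * n) n := by
  rw [card_subtype, card_avF_eq_catalan, succ_mul_catalan_eq_centralBinom]
  rfl
end

section
/- Let w_n denote the number of 3-stack-sortable permutations in S_n. Then for all n ≥ 2, w_n ≤ n · w_{n-1}. -/
/-- The stack-sorting map, implemented with a fuel parameter (fuel `l.length`
always suffices since the maximum entry is removed at each level). -/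
def stackSortAux : ℕ → List ℕ → List ℕ
  | 0, _ => []
  | _ + 1, [] => []
  | fuel + 1, l =>
      let m := l.foldr max 0
      stackSortAux fuel (l.takeWhile (fun x => x != m)) ++
        stackSortAux fuel ((l.dropWhile (fun x => x != m)).tail) ++ [m]

/-- The stack-sorting map `s`: `s(LmR) = s(L) s(R) m` where `m` is the largest entry. -/
def stackSort (l : List ℕ) : List ℕ := stackSortAux l.length l

/-- `w n`: the number of 3-stack-sortable permutations in `S_n`. -/
noncomputable def w (n : ℕ) : ℕ :=
  Nat.card {π : List ℕ //
    List.Perm π (List.range' 1 n) ∧ stackSort^[3] π = List.range' 1 n}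

lemma aux_cons (fuel : ℕ) (x : ℕ) (xs : List ℕ) :
    stackSortAux (fuel + 1) (x :: xs) =
      stackSortAux fuel ((x::xs).takeWhile (fun y => y != (x::xs).foldr max 0)) ++
        stackSortAux fuel (((x::xs).dropWhile (fun y => y != (x::xs).foldr max 0)).tail) ++
        [(x::xs).foldr max 0] := rfl

lemma foldr_max_mem : ∀ (l : List ℕ), l ≠ [] → l.foldr max 0 ∈ l
  | [a], _ => by simp
  | a :: b :: t, _ => by
    have := foldr_max_mem (b :: t) (by simp)
    show max a ((b::t).foldr max 0) ∈ _
    rcases max_cases a ((b::t).foldr max 0) with ⟨h, _⟩ | ⟨h, _⟩ <;> rw [h] <;> simp_all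

lemma le_foldr_max (l : List ℕ) : ∀ x ∈ l, x ≤ l.foldr max 0 := by
  induction l with
  | nil => simp
  | cons a t ih =>
    intro x hx
    rcases List.mem_cons.1 hx with h | h
    · subst h; simp
    · exact le_trans (ih x h) (le_max_right _ _)

lemma split_spec_s7 (l : List ℕ) (m : ℕ) (hm : m ∈ l) :
    l.takeWhile (fun x => x != m) ++ m :: (l.dropWhile (fun x => x != m)).tail = l ∧
    ∀ x ∈ l.takeWhile (fun x => x != m), x ≠ m := by
  induction l with
  | nil => simp at hm
  | cons a t ih =>
    by_cases ha : a = m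
    · subst ha
      simp [List.takeWhile_cons, List.dropWhile_cons]
    · have hm' : m ∈ t := by
        rcases List.mem_cons.1 hm with h | h
        · exact absurd h.symm ha
        · exact h
      obtain ⟨h1, h2⟩ := ih hm'
      constructor
      · simp only [List.takeWhile_cons, List.dropWhile_cons]
        have : (a != m) = true := by simpa using ha
        simp [this, h1]
      · intro x hx
        simp only [List.takeWhile_cons] at hx
        have : (a != m) = true := by simpa using ha
        rw [this] at hx
        simp only [if_true] at hx
        rcases hx with h | h
        · simpa using ha
        · exact h2 x (by assumption)

lemma stackSortAux_perm : ∀ (fuel : ℕ) (l : List ℕ), l.length ≤ fuel →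
    (stackSortAux fuel l).Perm l := by
  intro fuel
  induction fuel with
  | zero =>
    intro l hl
    rw [List.length_eq_zero_iff.1 (Nat.le_zero.1 hl)]
    exact List.Perm.refl _
  | succ fuel ih =>
    intro l hl
    match l with
    | [] => exact List.Perm.refl _
    | x :: xs =>
      set l := x :: xs with hldef
      set m := l.foldr max 0 with hmdef
      obtain ⟨hsplit, -⟩ := split_spec_s7 l m (foldr_max_mem l (by simp [hldef]))
      set T := l.takeWhile (fun y => y != m) with hT
      set R := (l.dropWhile (fun y => y != m)).tail with hR
      have hlen : T.length + (R.length + 1) = l.length := by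
        conv_rhs => rw [← hsplit]
        simp
      have hT' : T.length ≤ fuel := by omega
      have hR' : R.length ≤ fuel := by omega
      rw [aux_cons]
      have p1 : (stackSortAux fuel T ++ stackSortAux fuel R ++ [m]).Perm (T ++ R ++ [m]) :=
        ((ih T hT').append (ih R hR')).append (List.Perm.refl _)
      have p2 : (T ++ R ++ [m]).Perm (T ++ (m :: R)) := by
        rw [List.append_assoc]
        exact (List.Perm.refl T).append (List.perm_append_singleton m R)
      rw [hsplit] at p2
      exact p1.trans p2

lemma fuel_succ : ∀ (fuel : ℕ) (l : List ℕ), l.length ≤ fuel →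
    stackSortAux (fuel + 1) l = stackSortAux fuel l := by
  intro fuel
  induction fuel with
  | zero =>
    intro l hl
    rw [List.length_eq_zero_iff.1 (Nat.le_zero.1 hl)]
    rfl
  | succ fuel ih =>
    intro l hl
    match l with
    | [] => rfl
    | x :: xs =>
      set l := x :: xs with hldef
      set m := l.foldr max 0 with hmdef
      obtain ⟨hsplit, -⟩ := split_spec_s7 l m (foldr_max_mem l (by simp [hldef]))
      set T := l.takeWhile (fun y => y != m) with hT
      set R := (l.dropWhile (fun y => y != m)).tail with hR
      have hlen : T.length + (R.length + 1) = l.length := by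
        conv_rhs => rw [← hsplit]
        simp
      rw [aux_cons, aux_cons, ih T (by omega), ih R (by omega)]

lemma stackSortAux_eq (fuel : ℕ) (l : List ℕ) (h : l.length ≤ fuel) :
    stackSortAux fuel l = stackSortAux l.length l := by
  induction fuel with
  | zero => rw [Nat.le_zero.1 h]
  | succ fuel ih =>
    rcases Nat.lt_or_ge l.length (fuel + 1) with h' | h'
    · rw [fuel_succ fuel l (by omega), ih (by omega)]
    · have : l.length = fuel + 1 := le_antisymm h h'
      rw [this]

lemma aux_nil (fuel : ℕ) : stackSortAux fuel [] = [] := by cases fuel <;> rfl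

lemma aux_ne (fuel : ℕ) (l : List ℕ) (h : l ≠ []) :
    stackSortAux (fuel + 1) l =
      stackSortAux fuel (l.takeWhile (fun y => y != l.foldr max 0)) ++
        stackSortAux fuel ((l.dropWhile (fun y => y != l.foldr max 0)).tail) ++
        [l.foldr max 0] := by
  match l with
  | [] => exact absurd rfl h
  | x :: xs => exact aux_cons fuel x xs

lemma tw_app {p : ℕ → Bool} : ∀ (A : List ℕ) (b : ℕ) (C : List ℕ),
    (∀ x ∈ A, p x = true) → p b = false →
    (A ++ b :: C).takeWhile p = A ∧ (A ++ b :: C).dropWhile p = b :: C := by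
  intro A
  induction A with
  | nil => intro b C _ hb; simp [List.takeWhile_cons, List.dropWhile_cons, hb]
  | cons a t ih =>
    intro b C hA hb
    have ha : p a = true := hA a (by simp)
    obtain ⟨h1, h2⟩ := ih b C (fun x hx => hA x (by simp [hx])) hb
    constructor
    · simp only [List.cons_append, List.takeWhile_cons, ha, if_true, h1]
    · simp only [List.cons_append, List.dropWhile_cons, ha, if_true, h2]

lemma foldr_max_erase (l : List ℕ) (m : ℕ) (hm : m ∈ l.erase 1) :
    l.foldr max 0 = m → (l.erase 1).foldr max 0 = m := by
  intro h
  have h1 : (l.erase 1).foldr max 0 ∈ l.erase 1 :=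
    foldr_max_mem _ (by intro he; rw [he] at hm; exact List.not_mem_nil hm)
  have h2 : (l.erase 1).foldr max 0 ≤ m := by
    rw [← h]
    exact le_foldr_max l _ (List.mem_of_mem_erase h1)
  have h3 : m ≤ (l.erase 1).foldr max 0 := le_foldr_max _ m hm
  omega

lemma aux_erase : ∀ (fuel : ℕ) (l : List ℕ), l.length ≤ fuel → l.Nodup →
    (∀ x ∈ l, 0 < x) →
    stackSortAux fuel (l.erase 1) = (stackSortAux fuel l).erase 1 := by
  intro fuel
  induction fuel with
  | zero =>
    intro l hl _ _
    rw [List.length_eq_zero_iff.1 (Nat.le_zero.1 hl)]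
    rfl
  | succ fuel ih =>
    intro l hl hnd hpos
    by_cases h1 : 1 ∈ l
    · have hlne : l ≠ [] := by rintro rfl; exact List.not_mem_nil h1
      set m := l.foldr max 0 with hmdef
      have hm : m ∈ l := foldr_max_mem l hlne
      by_cases hm1 : m = 1
      · -- then l = [1]
        have hall : ∀ x ∈ l, x = 1 := fun x hx =>
          le_antisymm (hm1 ▸ le_foldr_max l x hx) (hpos x hx)
        have hl1 : l = [1] := by
          match l, hnd with
          | a :: t, hnd =>
            have ha : a = 1 := hall a (by simp)
            have ht : t = [] := by
              match t with
              | [] => rfl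
              | b :: s =>
                have hb : b = 1 := hall b (by simp)
                rw [ha, hb] at hnd
                simp at hnd
            rw [ha, ht]
        rw [hl1]
        have : ([1] : List ℕ).erase 1 = [] := rfl
        rw [this, aux_nil]
        rw [aux_ne fuel [1] (by simp)]
        simp [aux_nil]
      · -- m > 1
        obtain ⟨hsplit, hTne⟩ := split_spec_s7 l m hm
        set T := l.takeWhile (fun y => y != m) with hT
        set R := (l.dropWhile (fun y => y != m)).tail with hR
        have hTsub : T.Sublist l := List.takeWhile_sublist _
        have hRsub : R.Sublist l :=
          (List.tail_sublist _).trans (List.dropWhile_sublist _)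
        have hTnd : T.Nodup := hnd.sublist hTsub
        have hRnd : R.Nodup := hnd.sublist hRsub
        have hTpos : ∀ x ∈ T, 0 < x := fun x hx => hpos x (hTsub.subset hx)
        have hRpos : ∀ x ∈ R, 0 < x := fun x hx => hpos x (hRsub.subset hx)
        have hlen : T.length + (R.length + 1) = l.length := by
          conv_rhs => rw [← hsplit]; simp
        have hTlen : T.length ≤ fuel := by omega
        have hRlen : R.length ≤ fuel := by omega
        have hme : m ∈ l.erase 1 := hnd.mem_erase_iff.2 ⟨hm1, hm⟩
        have hmax' : (l.erase 1).foldr max 0 = m := foldr_max_erase l m hme rfl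
        have hmm : ((m != m) : Bool) = false := by simp
        -- nodup of the split
        have hndsplit : (T ++ m :: R).Nodup := hsplit ▸ hnd
        by_cases hT1 : 1 ∈ T
        · -- 1 in the left part
          have herase : l.erase 1 = T.erase 1 ++ m :: R := by
            rw [← hsplit, List.erase_append_left _ hT1]
          have hTA : ∀ x ∈ T.erase 1, ((x != m) : Bool) = true := by
            intro x hx
            simpa using hTne x (List.mem_of_mem_erase hx)
          obtain ⟨htw, hdw⟩ := tw_app (T.erase 1) m R hTA hmm
          have hcalc : stackSortAux (fuel + 1) (l.erase 1) =
              stackSortAux fuel (T.erase 1) ++ stackSortAux fuel R ++ [m] := by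
            rw [aux_ne fuel _ (by rw [herase]; simp)]
            rw [show (l.erase 1).foldr max 0 = m from hmax']
            rw [herase, htw, hdw]
            rfl
          rw [hcalc, ih T hTlen hTnd hTpos]
          -- RHS
          rw [aux_ne fuel l hlne, ← hmdef, ← hT, ← hR]
          have h1ST : 1 ∈ stackSortAux fuel T :=
            ((stackSortAux_perm fuel T hTlen).mem_iff).2 hT1
          rw [List.erase_append_left _ (by simp [h1ST] : 1 ∈ stackSortAux fuel T ++ stackSortAux fuel R)]
          rw [List.erase_append_left _ h1ST]
        · -- 1 in R
          have h1R : 1 ∈ R := by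
            have : 1 ∈ T ++ m :: R := hsplit ▸ h1
            rcases List.mem_append.1 this with h | h
            · exact absurd h hT1
            · rcases List.mem_cons.1 h with h | h
              · exact absurd h.symm hm1
              · exact h
          have herase : l.erase 1 = T ++ m :: R.erase 1 := by
            rw [← hsplit, List.erase_append_right _ hT1]
            congr 1
            rw [List.erase_cons_tail]
            simpa using hm1
          have hTA : ∀ x ∈ T, ((x != m) : Bool) = true := by
            intro x hx; simpa using hTne x hx
          obtain ⟨htw, hdw⟩ := tw_app T m (R.erase 1) hTA hmm
          have hcalc : stackSortAux (fuel + 1) (l.erase 1) =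
              stackSortAux fuel T ++ stackSortAux fuel (R.erase 1) ++ [m] := by
            rw [aux_ne fuel _ (by rw [herase]; simp)]
            rw [show (l.erase 1).foldr max 0 = m from hmax']
            rw [herase, htw, hdw]
            rfl
          rw [hcalc, ih R hRlen hRnd hRpos]
          rw [aux_ne fuel l hlne, ← hmdef, ← hT, ← hR]
          have h1ST : 1 ∉ stackSortAux fuel T := by
            rw [(stackSortAux_perm fuel T hTlen).mem_iff]
            exact hT1
          have h1SR : 1 ∈ stackSortAux fuel R :=
            ((stackSortAux_perm fuel R hRlen).mem_iff).2 h1R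
          rw [List.erase_append_left _ (by simp [h1SR] : 1 ∈ stackSortAux fuel T ++ stackSortAux fuel R)]
          rw [List.erase_append_right _ h1ST]
    · rw [List.erase_of_not_mem h1, List.erase_of_not_mem]
      rw [(stackSortAux_perm (fuel+1) l hl).mem_iff]
      exact h1

lemma max_sub_one (a b : ℕ) : max a b - 1 = max (a - 1) (b - 1) := by
  rcases le_total a b with h | h
  · rw [max_eq_right h, max_eq_right (by omega)]
  · rw [max_eq_left h, max_eq_left (by omega)]

lemma foldr_max_map (l : List ℕ) :
    (l.map (fun x => x - 1)).foldr max 0 = l.foldr max 0 - 1 := by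
  induction l with
  | nil => rfl
  | cons a t ih => simp only [List.map_cons, List.foldr_cons, ih, max_sub_one]

lemma tw_map (m : ℕ) (hm : 0 < m) : ∀ (l : List ℕ), (∀ x ∈ l, 0 < x) →
    (l.map (fun x => x - 1)).takeWhile (fun y => y != m - 1) =
      (l.takeWhile (fun y => y != m)).map (fun x => x - 1) ∧
    (l.map (fun x => x - 1)).dropWhile (fun y => y != m - 1) =
      (l.dropWhile (fun y => y != m)).map (fun x => x - 1) := by
  intro l
  induction l with
  | nil => intro _; simp
  | cons a t ih =>
    intro hp
    have ha : 0 < a := hp a (by simp)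
    obtain ⟨ih1, ih2⟩ := ih (fun x hx => hp x (by simp [hx]))
    by_cases hae : a = m
    · subst hae
      have e1 : ((a - 1 != a - 1) : Bool) = false := by simp
      have e2 : ((a != a) : Bool) = false := by simp
      simp only [List.map_cons, List.takeWhile_cons, List.dropWhile_cons, e1, e2]
      simp
    · have e1 : ((a - 1 != m - 1) : Bool) = true := by
        simp only [bne_iff_ne, ne_eq]
        omega
      have e2 : ((a != m) : Bool) = true := by simpa using hae
      simp only [List.map_cons, List.takeWhile_cons, List.dropWhile_cons, e1, e2,
        if_true, ih1, ih2]
      simp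

lemma aux_map : ∀ (fuel : ℕ) (l : List ℕ), l.length ≤ fuel → (∀ x ∈ l, 0 < x) →
    stackSortAux fuel (l.map (fun x => x - 1)) =
      (stackSortAux fuel l).map (fun x => x - 1) := by
  intro fuel
  induction fuel with
  | zero =>
    intro l hl _
    rw [List.length_eq_zero_iff.1 (Nat.le_zero.1 hl)]
    rfl
  | succ fuel ih =>
    intro l hl hpos
    match l with
    | [] => rfl
    | x :: xs =>
      set l := x :: xs with hldef
      have hlne : l ≠ [] := by simp [hldef]
      set m := l.foldr max 0 with hmdef
      have hm : m ∈ l := foldr_max_mem l hlne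
      have hmpos : 0 < m := hpos m hm
      obtain ⟨hsplit, -⟩ := split_spec_s7 l m hm
      set T := l.takeWhile (fun y => y != m) with hT
      set R := (l.dropWhile (fun y => y != m)).tail with hR
      have hTsub : T.Sublist l := List.takeWhile_sublist _
      have hRsub : R.Sublist l :=
        (List.tail_sublist _).trans (List.dropWhile_sublist _)
      have hlen : T.length + (R.length + 1) = l.length := by
        conv_rhs => rw [← hsplit]; simp
      have hTlen : T.length ≤ fuel := by omega
      have hRlen : R.length ≤ fuel := by omega
      obtain ⟨htw, hdw⟩ := tw_map m hmpos l hpos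
      rw [aux_ne fuel (l.map (fun x => x - 1)) (by simp [hldef])]
      rw [aux_ne fuel l hlne, ← hmdef, ← hT, ← hR]
      rw [foldr_max_map, ← hmdef, htw, hdw, ← hT]
      rw [ih T (by simpa using hTlen) (fun x hx => hpos x (hTsub.subset hx))]
      rw [show ((l.dropWhile (fun y => y != m)).map (fun x => x - 1)).tail
            = R.map (fun x => x - 1) by rw [hR, ← List.map_tail]]
      rw [ih R (by simpa using hRlen) (fun x hx => hpos x (hRsub.subset hx))]
      simp

lemma stackSort_perm (l : List ℕ) : (stackSort l).Perm l :=
  stackSortAux_perm _ _ le_rfl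

lemma stackSort_erase (l : List ℕ) (hnd : l.Nodup) (hpos : ∀ x ∈ l, 0 < x) :
    stackSort (l.erase 1) = (stackSort l).erase 1 := by
  unfold stackSort
  rw [← stackSortAux_eq l.length (l.erase 1)
    (le_trans (List.Sublist.length_le List.erase_sublist) le_rfl)]
  exact aux_erase l.length l le_rfl hnd hpos

lemma stackSort_map (l : List ℕ) (hpos : ∀ x ∈ l, 0 < x) :
    stackSort (l.map (fun x => x - 1)) = (stackSort l).map (fun x => x - 1) := by
  unfold stackSort
  rw [List.length_map]
  exact aux_map l.length l le_rfl hpos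

lemma onestep (l : List ℕ) (hnd : l.Nodup) (hpos : ∀ x ∈ l, 0 < x) :
    stackSort ((l.erase 1).map (fun x => x - 1)) =
      ((stackSort l).erase 1).map (fun x => x - 1) := by
  rw [stackSort_map _ (fun x hx => hpos x (List.mem_of_mem_erase hx))]
  rw [stackSort_erase l hnd hpos]

lemma threestep (l : List ℕ) (hnd : l.Nodup) (hpos : ∀ x ∈ l, 0 < x) :
    stackSort^[3] ((l.erase 1).map (fun x => x - 1)) =
      ((stackSort^[3] l).erase 1).map (fun x => x - 1) := by
  have key : ∀ (a : List ℕ), a.Nodup → (∀ x ∈ a, 0 < x) →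
      stackSort ((a.erase 1).map (fun x => x - 1)) =
        ((stackSort a).erase 1).map (fun x => x - 1) := fun a h1 h2 => onestep a h1 h2
  have pres : ∀ (a : List ℕ), a.Nodup → (∀ x ∈ a, 0 < x) →
      (stackSort a).Nodup ∧ (∀ x ∈ stackSort a, 0 < x) := by
    intro a h1 h2
    exact ⟨(stackSort_perm a).nodup_iff.2 h1,
      fun x hx => h2 x ((stackSort_perm a).subset hx)⟩
  obtain ⟨h1', h2'⟩ := pres l hnd hpos
  obtain ⟨h1'', h2''⟩ := pres _ h1' h2'
  show stackSort (stackSort (stackSort _)) = _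
  rw [key l hnd hpos, key _ h1' h2', key _ h1'' h2'']
  rfl

lemma erase_range' (n : ℕ) (hn : 1 ≤ n) :
    (List.range' 1 n).erase 1 = List.range' 2 (n - 1) := by
  obtain ⟨k, rfl⟩ : ∃ k, n = k + 1 := ⟨n - 1, by omega⟩
  rw [List.range'_succ, List.erase_cons_head]
  norm_num

lemma map_range'_aux (k : ℕ) : ∀ (s : ℕ), 1 ≤ s →
    (List.range' (s + 1) k).map (fun x => x - 1) = List.range' s k := by
  induction k with
  | zero => intro s _; rfl
  | succ k ih =>
    intro s hs
    rw [List.range'_succ, List.range'_succ, List.map_cons, ih (s + 1) (by omega)]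
    simp

lemma map_range' (k : ℕ) :
    (List.range' 2 k).map (fun x => x - 1) = List.range' 1 k :=
  map_range'_aux k 1 le_rfl

lemma recover : ∀ (l l' : List ℕ), 1 ∈ l → 1 ∈ l' →
    List.idxOf 1 l = List.idxOf 1 l' → l.erase 1 = l'.erase 1 → l = l' := by
  intro l
  induction l with
  | nil => intro l' h1; simp at h1
  | cons x t ih =>
    intro l' h1 h1' hidx her
    match l' with
    | [] => simp at h1'
    | y :: t' =>
      by_cases hx : x = 1
      · subst hx
        have hy : y = 1 := by
          by_contra hy
          rw [List.idxOf_cons_eq t rfl, List.idxOf_cons_ne t' hy] at hidx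
          simp at hidx
        subst hy
        rw [List.erase_cons_head, List.erase_cons_head] at her
        rw [her]
      · have hy : y ≠ 1 := by
          intro hy
          subst hy
          rw [List.idxOf_cons_ne t hx, List.idxOf_cons_eq t' rfl] at hidx
          simp at hidx
        rw [List.erase_cons_tail, List.erase_cons_tail] at her
        · have hxy : x = y := by injection her
          have hte : t.erase 1 = t'.erase 1 := by injection her
          have h1t : 1 ∈ t := by
            rcases List.mem_cons.1 h1 with h | h
            · exact absurd h.symm hx
            · exact h
          have h1t' : 1 ∈ t' := by
            rcases List.mem_cons.1 h1' with h | h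
            · exact absurd h.symm hy
            · exact h
          rw [List.idxOf_cons_ne t hx, List.idxOf_cons_ne t' hy] at hidx
          rw [hxy, ih t' h1t h1t' (Nat.succ_injective hidx) hte]
        · simpa using hy
        · simpa using hx


lemma unmap (l : List ℕ) (h : ∀ x ∈ l, 0 < x) :
    (l.map (fun x => x - 1)).map (fun x => x + 1) = l := by
  rw [List.map_map]
  have : ∀ x ∈ l, (((fun x => x + 1) ∘ fun x => x - 1) x) = id x := by
    intro x hx
    have := h x hx
    simp only [Function.comp_apply, id_eq]
    omega
  rw [List.map_congr_left this, List.map_id]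

lemma finite_perm_subtype (L : List ℕ) (Q : List ℕ → Prop) :
    Finite {π : List ℕ // π.Perm L ∧ Q π} := by
  apply Finite.of_injective
    (fun x : {π : List ℕ // π.Perm L ∧ Q π} =>
      (⟨x.1, List.mem_permutations.2 x.2.1⟩ : {y // y ∈ L.permutations}))
  intro a b h
  cases a
  cases b
  simpa using h

/-- For all `n ≥ 2`, `w_n ≤ n · w_{n-1}`. -/
theorem stmt7 (n : ℕ) (hn : 2 ≤ n) : w n ≤ n * w (n - 1) := by
  classical
  set k := n - 1 with hk
  have hk1 : 1 ≤ k := by omega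
  have main : ∀ (π : List ℕ), π.Perm (List.range' 1 n) →
      stackSort^[3] π = List.range' 1 n →
      (List.idxOf 1 π < n ∧
       ((π.erase 1).map (fun y => y - 1)).Perm (List.range' 1 k) ∧
       stackSort^[3] ((π.erase 1).map (fun y => y - 1)) = List.range' 1 k) := by
    intro π hp hs
    have hnd : π.Nodup := hp.nodup_iff.2 (List.nodup_range' (s := 1) (n := n))
    have hpos : ∀ x ∈ π, 0 < x := fun x hx => (List.mem_range'_1.1 (hp.subset hx)).1
    have h1π : 1 ∈ π := hp.mem_iff.2 (List.mem_range'_1.2 ⟨le_rfl, by omega⟩)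
    have hlen : π.length = n := by rw [hp.length_eq, List.length_range']
    refine ⟨?_, ?_, ?_⟩
    · rw [← hlen]
      exact List.idxOf_lt_length_iff.2 h1π
    · have e1 := (hp.erase 1).map (fun y => y - 1)
      rwa [erase_range' n (by omega), ← hk, map_range'] at e1
    · have e2 := threestep π hnd hpos
      rwa [hs, erase_range' n (by omega), ← hk, map_range'] at e2
  have hinj : Function.Injective
      (fun x : {π : List ℕ //
          List.Perm π (List.range' 1 n) ∧ stackSort^[3] π = List.range' 1 n} =>
        ((⟨List.idxOf 1 x.1, (main x.1 x.2.1 x.2.2).1⟩ : Fin n),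
         (⟨(x.1.erase 1).map (fun y => y - 1), (main x.1 x.2.1 x.2.2).2.1,
            (main x.1 x.2.1 x.2.2).2.2⟩ : {π : List ℕ //
              List.Perm π (List.range' 1 k) ∧ stackSort^[3] π = List.range' 1 k}))) := by
    intro a b h
    have h1 : List.idxOf 1 a.1 = List.idxOf 1 b.1 :=
      congrArg Fin.val (congrArg Prod.fst h)
    have h2 : (a.1.erase 1).map (fun y => y - 1) = (b.1.erase 1).map (fun y => y - 1) :=
      congrArg Subtype.val (congrArg Prod.snd h)
    have hposa : ∀ x ∈ a.1.erase 1, 0 < x := fun x hx =>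
      (List.mem_range'_1.1 (a.2.1.subset (List.mem_of_mem_erase hx))).1
    have hposb : ∀ x ∈ b.1.erase 1, 0 < x := fun x hx =>
      (List.mem_range'_1.1 (b.2.1.subset (List.mem_of_mem_erase hx))).1
    have her : a.1.erase 1 = b.1.erase 1 := by
      have := congrArg (List.map (fun y => y + 1)) h2
      rwa [unmap _ hposa, unmap _ hposb] at this
    have h1a : 1 ∈ a.1 := a.2.1.mem_iff.2 (List.mem_range'_1.2 ⟨le_rfl, by omega⟩)
    have h1b : 1 ∈ b.1 := b.2.1.mem_iff.2 (List.mem_range'_1.2 ⟨le_rfl, by omega⟩)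
    exact Subtype.ext (recover a.1 b.1 h1a h1b h1 her)
  haveI : Finite {π : List ℕ //
      List.Perm π (List.range' 1 k) ∧ stackSort^[3] π = List.range' 1 k} :=
    finite_perm_subtype _ _
  have hle := Nat.card_le_card_of_injective _ hinj
  rw [Nat.card_prod, Nat.card_eq_fintype_card (α := Fin n), Fintype.card_fin] at hle
  exact hle
end

section
/- For any nonempty permutation π ∈ S_n that is not the identity, the index c(π) with π_{c(π)} = n - tl(π) is a tail-bound descent of π. -/
/-- The `i`-th entry of `π` (1-based indexing). -/
def entry (π : List ℕ) (i : ℕ) : ℕ := π.getD (i - 1) 0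

/-- The tail length `tl(π)` of `π ∈ S_n`: the largest `ℓ ∈ {0,…,n}` such that
`π_i = i` for all `i ∈ {n-ℓ+1,…,n}`. -/
def tl (n : ℕ) (π : List ℕ) : ℕ :=
  Nat.findGreatest (fun ℓ => ∀ i ∈ Finset.Ioc (n - ℓ) n, entry π i = i) n

/-- For any `π ∈ S_n` other than the identity, the index `c = c(π)` with
`π_c = n - tl(π)` is a tail-bound descent of `π`: `c < n`, `π_c > π_{c+1}`, and
every hook with southwest endpoint `(c, π_c)` has its northeast endpoint in the
tail. -/
theorem stmt12 (n : ℕ) (π : List ℕ) (hπ : List.Perm π (List.range' 1 n))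
    (hne : π ≠ List.range' 1 n)
    (c : ℕ) (hc1 : 1 ≤ c) (hcn : c ≤ n) (hcv : entry π c = n - tl n π) :
    c < n ∧ entry π (c + 1) < entry π c ∧
      ∀ j, c < j → j ≤ n → entry π c < entry π j → n - tl n π < j := by
  have hlen : π.length = n := by simpa using hπ.length_eq
  have hnodup : π.Nodup := hπ.nodup_iff.mpr (List.nodup_range' (step := 1) (h := by norm_num))
  set P : ℕ → Prop := fun ℓ => ∀ i ∈ Finset.Ioc (n - ℓ) n, entry π i = i with hP
  set t : ℕ := tl n π with ht
  have htdef : t = Nat.findGreatest P n := rfl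
  have htn : t ≤ n := Nat.findGreatest_le n
  -- basic entry facts
  have hmem : ∀ i, 1 ≤ i → i ≤ n → 1 ≤ entry π i ∧ entry π i ≤ n := by
    intro i h1 h2
    have hk : i - 1 < π.length := by omega
    have hm : entry π i ∈ π := by
      unfold entry
      rw [List.getD_eq_getElem _ _ hk]
      exact List.getElem_mem hk
    have := hπ.mem_iff.mp hm
    rw [List.mem_range'_1] at this
    omega
  have hinj : ∀ i j, 1 ≤ i → i ≤ n → 1 ≤ j → j ≤ n → entry π i = entry π j → i = j := by
    intro i j hi1 hi2 hj1 hj2 h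
    have hki : i - 1 < π.length := by omega
    have hkj : j - 1 < π.length := by omega
    unfold entry at h
    rw [List.getD_eq_getElem _ _ hki, List.getD_eq_getElem _ _ hkj] at h
    have := (List.Nodup.getElem_inj_iff hnodup (hi := hki) (hj := hkj)).mp h
    omega
  -- tail property
  have hspec : P t := by
    rw [htdef]
    apply Nat.findGreatest_spec (Nat.zero_le n)
    intro i hi
    rw [Finset.mem_Ioc] at hi
    omega
  have htail : ∀ i, n - t < i → i ≤ n → entry π i = i := by
    intro i h1 h2
    exact hspec i (Finset.mem_Ioc.mpr ⟨h1, h2⟩)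
  -- t < n
  have htlt : t < n := by
    rcases lt_or_ge t n with h | h
    · exact h
    · exfalso
      have htn' : t = n := le_antisymm htn h
      apply hne
      apply List.ext_getElem (by simp [hlen])
      intro k h1 h2
      have h2' : k < n := by simpa using h2
      have he : entry π (k + 1) = k + 1 := htail (k + 1) (by omega) (by omega)
      unfold entry at he
      have hk : k < π.length := by omega
      rw [Nat.add_sub_cancel, List.getD_eq_getElem _ _ hk] at he
      rw [List.getElem_range', he]
      omega
  -- maximality: entry at n - t is not n - t
  have hnotP : ¬ P (t + 1) :=
    Nat.findGreatest_is_greatest (by rw [← htdef]; omega) (by omega)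
  have hmax : entry π (n - t) ≠ n - t := by
    have hex : ∃ i, i ∈ Finset.Ioc (n - (t + 1)) n ∧ entry π i ≠ i := by
      by_contra hcon
      push_neg at hcon
      exact hnotP fun i hi => hcon i hi
    obtain ⟨i, hi, hne'⟩ := hex
    rw [Finset.mem_Ioc] at hi
    have hieq : i = n - t := by
      rcases lt_or_ge (n - t) i with h | h
      · exact absurd (htail i h hi.2) hne'
      · omega
    rwa [← hieq]
  -- key: values above n - t sit in the tail
  have hcarg : ∀ j, 1 ≤ j → j ≤ n → n - t < entry π j → n - t < j := by
    intro j hj1 hj2 hv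
    have hvm := hmem j hj1 hj2
    have hvt : entry π (entry π j) = entry π j := htail _ hv hvm.2
    have := hinj j (entry π j) hj1 hj2 hvm.1 hvm.2 hvt.symm
    omega
  have hcne : c ≠ n - t := by
    intro h
    rw [h] at hcv
    exact hmax hcv
  have hcltn : c < n := by
    rcases lt_or_ge c n with h | h
    · exact h
    · exfalso
      have hceq : c = n := by omega
      rcases Nat.eq_zero_or_pos t with h0 | h0
      · apply hmax
        rw [h0, Nat.sub_zero, ← hceq, hcv]
        omega
      · have hnn : entry π n = n := htail n (Nat.sub_lt (by omega) h0) (le_refl n)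
        rw [← hceq, hcv] at hnn
        omega
  refine ⟨hcltn, ?_, ?_⟩
  · -- descent
    have hw := hmem (c + 1) (by omega) (by omega)
    have hwne : entry π (c + 1) ≠ n - t := by
      intro h
      have := hinj c (c + 1) hc1 hcn (by omega) (by omega) (by rw [hcv, h])
      omega
    rcases lt_or_ge (entry π (c + 1)) (n - t) with h | h
    · omega
    · exfalso
      have h' : n - t < entry π (c + 1) := by omega
      have h1 := hcarg (c + 1) (by omega) (by omega) h'
      have h2 : n - t < c := by omega
      have hcc := htail c h2 hcn
      rw [hcv] at hcc
      omega
  · intro j hcj hjn hv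
    exact hcarg j (by omega) hjn (by rw [← hcv]; exact hv)
end

section
/- For a permutation π ∈ S_n, the number of legal spaces leg(π) equals n + 1 if and only if π avoids the pattern 231. -/
/-- The open interval `(a, a+1)` is a legal space for `π ∈ S_n` if there are no
indices `i1 < i2 < i3` with `π_{i3} ≤ a < π_{i1} < π_{i2}`. -/
def LegalSpace (n : ℕ) (π : List ℕ) (a : ℕ) : Prop :=
  ¬ ∃ i1 i2 i3 : ℕ, 1 ≤ i1 ∧ i1 < i2 ∧ i2 < i3 ∧ i3 ≤ n ∧
      entry π i3 ≤ a ∧ a < entry π i1 ∧ entry π i1 < entry π i2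

/-- `leg(π)`: the number of legal spaces `(a, a+1)`, `a ∈ {0,…,n}`, of `π ∈ S_n`. -/
noncomputable def leg (n : ℕ) (π : List ℕ) : ℕ :=
  Nat.card {a : ℕ // a ≤ n ∧ LegalSpace n π a}

/-- For `π ∈ S_n`, `leg(π) = n + 1` iff `π` avoids the pattern 231. -/
theorem stmt13 (n : ℕ) (π : List ℕ) (hπ : List.Perm π (List.range' 1 n)) :
    leg n π = n + 1 ↔ ¬ Contains231 π := by
  have hlen : π.length = n := by simpa using hπ.length_eq
  have hmem : ∀ x ∈ π, 1 ≤ x ∧ x ≤ n := by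
    intro x hx
    have := hπ.mem_iff.mp hx
    simp [List.mem_range'_1] at this
    omega
  have hA : (∀ a ≤ n, LegalSpace n π a) ↔ ¬ Contains231 π := by
    constructor
    · intro h hC
      obtain ⟨i1, i2, i3, h12, h23, h3, hv1, hv2⟩ := hC
      have hmem3 : π.getD i3 0 ∈ π := by
        rw [List.getD_eq_getElem π 0 h3]
        exact List.getElem_mem h3
      have ha_le : π.getD i3 0 ≤ n := (hmem _ hmem3).2
      exact h _ ha_le ⟨i1 + 1, i2 + 1, i3 + 1, by omega, by omega, by omega,
        by omega, by simp [entry], by simpa [entry] using hv1, by simpa [entry] using hv2⟩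
    · intro hC a _ hcon
      obtain ⟨i1, i2, i3, h1, h12, h23, h3n, hE3, hE1, hE2⟩ := hcon
      simp only [entry] at hE3 hE1 hE2
      exact hC ⟨i1 - 1, i2 - 1, i3 - 1, by omega, by omega, by omega,
        by omega, hE2⟩
  have hcard : leg n π = Set.ncard {a : ℕ | a ≤ n ∧ LegalSpace n π a} :=
    Nat.card_coe_set_eq _
  have hIic : (Set.Iic n).ncard = n + 1 := by
    rw [← Finset.coe_Iic, Set.ncard_coe_finset, Nat.card_Iic]
  rw [← hA, hcard]
  constructor
  · intro h a ha
    by_contra hL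
    have hsub : {a : ℕ | a ≤ n ∧ LegalSpace n π a} ⊂ Set.Iic n := by
      constructor
      · intro x hx; exact hx.1
      · intro hsup
        exact hL (hsup (show a ∈ Set.Iic n from ha)).2
    have := Set.ncard_lt_ncard hsub (Set.finite_Iic n)
    omega
  · intro h
    have heq : {a : ℕ | a ≤ n ∧ LegalSpace n π a} = Set.Iic n :=
      Set.ext fun a => ⟨fun h' => h'.1, fun ha => ⟨ha, h a ha⟩⟩
    rw [heq, hIic]
end

section
/- For the unique solution Q(t,x,a) = Σ_{n≥1} t^n Q_n(x,a) of the functional equation in Theorem 1.1, each Q_n(x,a) is a polynomial in x and a of degree at most n + 1 in each variable. -/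
/-- The coefficient ring `ℤ[x][a]` (outer variable `a`, inner variable `x`). -/
abbrev R2 : Type := Polynomial (Polynomial ℤ)

/-- Setting `a := 0`, as a ring endomorphism of `ℤ[x][a]`. -/
noncomputable def evalA : R2 →+* R2 :=
  Polynomial.C.comp (Polynomial.evalRingHom 0)

/-- Setting `x := 0`, as a ring endomorphism of `ℤ[x][a]`. -/
noncomputable def evalX : R2 →+* R2 :=
  Polynomial.mapRingHom (Polynomial.C.comp (Polynomial.evalRingHom 0))

/-- The elements `a` and `x` of `ℤ[x][a]`. -/
noncomputable def aR : R2 := Polynomial.X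
noncomputable def xR : R2 := Polynomial.C Polynomial.X

/-- Degree at most `b` in `a` and `c` in `x`. -/
def Bd (b c : ℕ) (p : R2) : Prop :=
  p.natDegree ≤ b ∧ ∀ k, (p.coeff k).natDegree ≤ c

lemma Bd_zero (b c : ℕ) : Bd b c (0 : R2) := by
  constructor
  · simp
  · intro k; simp

lemma Bd_mono {b c b' c' : ℕ} {p : R2} (hb : b ≤ b') (hc : c ≤ c') (h : Bd b c p) :
    Bd b' c' p :=
  ⟨h.1.trans hb, fun k => (h.2 k).trans hc⟩

lemma Bd_add {b c : ℕ} {p q : R2} (hp : Bd b c p) (hq : Bd b c q) : Bd b c (p + q) := by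
  refine ⟨(Polynomial.natDegree_add_le p q).trans (max_le hp.1 hq.1), fun k => ?_⟩
  rw [Polynomial.coeff_add]
  exact (Polynomial.natDegree_add_le _ _).trans (max_le (hp.2 k) (hq.2 k))

lemma Bd_neg {b c : ℕ} {p : R2} (hp : Bd b c p) : Bd b c (-p) := by
  refine ⟨by simpa using hp.1, fun k => ?_⟩
  rw [Polynomial.coeff_neg]
  simpa using hp.2 k

lemma Bd_sub {b c : ℕ} {p q : R2} (hp : Bd b c p) (hq : Bd b c q) : Bd b c (p - q) := by
  rw [sub_eq_add_neg]; exact Bd_add hp (Bd_neg hq)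

lemma Bd_mul {b c b' c' : ℕ} {p q : R2} (hp : Bd b c p) (hq : Bd b' c' q) :
    Bd (b + b') (c + c') (p * q) := by
  refine ⟨(Polynomial.natDegree_mul_le).trans (add_le_add hp.1 hq.1), fun k => ?_⟩
  rw [Polynomial.coeff_mul]
  refine Polynomial.natDegree_sum_le_of_forall_le _ _ fun i _ => ?_
  exact (Polynomial.natDegree_mul_le).trans (add_le_add (hp.2 _) (hq.2 _))

lemma Bd_sum {b c : ℕ} {s : Finset ℕ} {f : ℕ → R2} (h : ∀ i ∈ s, Bd b c (f i)) :
    Bd b c (∑ i ∈ s, f i) := by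
  refine ⟨Polynomial.natDegree_sum_le_of_forall_le _ _ fun i hi => (h i hi).1, fun k => ?_⟩
  rw [Polynomial.finset_sum_coeff]
  exact Polynomial.natDegree_sum_le_of_forall_le _ _ fun i hi => (h i hi).2 k

lemma Bd_one : Bd 0 0 (1 : R2) := by
  refine ⟨by simp, fun k => ?_⟩
  by_cases h : k = 0 <;> simp [Polynomial.coeff_one, h]

lemma Bd_a : Bd 1 0 aR := by
  refine ⟨Polynomial.natDegree_X_le, fun k => ?_⟩
  rw [aR, Polynomial.coeff_X]
  split <;> simp

lemma Bd_x : Bd 0 1 xR := by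
  refine ⟨by simp [xR], fun k => ?_⟩
  rw [xR, Polynomial.coeff_C]
  split <;> simp [Polynomial.natDegree_X_le]

lemma Bd_evalA {b c : ℕ} {p : R2} (h : Bd b c p) : Bd b c (evalA p) := by
  have he : evalA p = Polynomial.C (p.eval 0) := rfl
  refine ⟨by simp [he], fun k => ?_⟩
  rw [he, Polynomial.coeff_C]
  split
  · rw [← Polynomial.coeff_zero_eq_eval_zero]; exact h.2 0
  · simp

lemma Bd_evalX {b c : ℕ} {p : R2} (h : Bd b c p) : Bd b c (evalX p) := by
  have he : evalX p = p.map (Polynomial.C.comp (Polynomial.evalRingHom 0)) := rfl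
  refine ⟨?_, fun k => ?_⟩
  · rw [he]; exact (Polynomial.natDegree_map_le).trans h.1
  rw [he, Polynomial.coeff_map]
  simp

lemma Bd_divA {b c : ℕ} {D p : R2} (h : aR * D = p) (hp : Bd b c p) : Bd (b - 1) c D := by
  constructor
  · by_cases hD : D = 0
    · simp [hD]
    · have hd : p.natDegree = D.natDegree + 1 := by
        rw [← h, aR, Polynomial.natDegree_X_mul hD]
      have := hp.1
      omega
  · intro k
    have : D.coeff k = p.coeff (k + 1) := by
      rw [← h, aR, Polynomial.coeff_X_mul]
    rw [this]; exact hp.2 _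

lemma Bd_divX {b c : ℕ} {S p : R2} (h : xR * S = p) (hp : Bd b c p) : Bd b (c - 1) S := by
  constructor
  · by_cases hS : S = 0
    · simp [hS]
    · have hd : p.natDegree = S.natDegree := by
        rw [← h, xR, Polynomial.natDegree_C_mul Polynomial.X_ne_zero]
      rw [← hd]; exact hp.1
  · intro k
    have hc : Polynomial.X * S.coeff k = p.coeff k := by
      rw [← h, xR, Polynomial.coeff_C_mul]
    by_cases hS : S.coeff k = 0
    · simp [hS]
    · have : (p.coeff k).natDegree = (S.coeff k).natDegree + 1 := by
        rw [← hc, Polynomial.natDegree_X_mul hS]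
      have := hp.2 k
      omega

/-- If `(Q_n)` satisfies `Q_0 = 0`, `Q_1 = (x+1)²(a+1)²` and the recurrence
`Q_n = (1+x)(1+a)²(Q_{n−1} − Q_{n−1}(x,0))/a + (1+x)·a·Q_{n−1}
      + ((1+x)/x)·Σ_{j=1}^{n−2}(Q_j − Q_j(x,0))(Q_{n−j−1} − Q_{n−j−1}(0,a))`
(the exact quotients being expressed by witnesses `D` and `S`), then each `Q_n`
has degree at most `n+1` in each of the variables `a` and `x`. -/
theorem stmt15 (Q : ℕ → R2)
    (h0 : Q 0 = 0)
    (h1 : Q 1 = (xR + 1) ^ 2 * (aR + 1) ^ 2)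
    (hrec : ∀ n, 2 ≤ n → ∃ D S : R2,
        aR * D = Q (n - 1) - evalA (Q (n - 1)) ∧
        xR * S = ∑ j ∈ Finset.Icc 1 (n - 2),
            (Q j - evalA (Q j)) * (Q (n - j - 1) - evalX (Q (n - j - 1))) ∧
        Q n = (1 + xR) * (1 + aR) ^ 2 * D + (1 + xR) * aR * Q (n - 1)
              + (1 + xR) * S) :
    ∀ n, (Q n).natDegree ≤ n + 1 ∧ ∀ k, ((Q n).coeff k).natDegree ≤ n + 1 := by
  have key : ∀ n, Bd (n + 1) (n + 1) (Q n) := by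
    intro n
    induction n using Nat.strong_induction_on with
    | _ n ih =>
      match n with
      | 0 => rw [h0]; exact Bd_zero _ _
      | 1 =>
          rw [h1]
          have hx1 : Bd 0 1 (xR + 1) := Bd_add Bd_x (Bd_mono (le_refl 0) (by omega) Bd_one)
          have ha1 : Bd 1 0 (aR + 1) := Bd_add Bd_a (Bd_mono (by omega) (le_refl 0) Bd_one)
          have h2 : Bd 0 2 ((xR + 1) ^ 2) := by
            rw [sq]; exact Bd_mul hx1 hx1
          have h3 : Bd 2 0 ((aR + 1) ^ 2) := by
            rw [sq]; exact Bd_mul ha1 ha1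
          exact Bd_mono (by omega) (by omega) (Bd_mul h2 h3)
      | (m + 2) =>
          obtain ⟨D, S, hD, hS, hQ⟩ := hrec (m + 2) (by omega)
          have e1 : m + 2 - 1 = m + 1 := rfl
          have e2 : m + 2 - 2 = m := rfl
          rw [e1] at hD hQ
          rw [e2] at hS
          have hQm : Bd (m + 2) (m + 2) (Q (m + 1)) := ih (m + 1) (by omega)
          have hP : Bd (m + 2) (m + 2) (Q (m + 1) - evalA (Q (m + 1))) :=
            Bd_sub hQm (Bd_evalA hQm)
          have hDb : Bd (m + 1) (m + 2) D := Bd_divA hD hP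
          have hsum : Bd (m + 3) (m + 3)
              (∑ j ∈ Finset.Icc 1 m,
                (Q j - evalA (Q j)) * (Q (m + 2 - j - 1) - evalX (Q (m + 2 - j - 1)))) := by
            refine Bd_sum fun j hj => ?_
            simp only [Finset.mem_Icc] at hj
            have hj1 : Bd (j + 1) (j + 1) (Q j) := ih j (by omega)
            have e3 : m + 2 - j - 1 = m + 1 - j := by omega
            rw [e3]
            have hj2 : Bd (m + 1 - j + 1) (m + 1 - j + 1) (Q (m + 1 - j)) :=
              ih (m + 1 - j) (by omega)
            refine Bd_mono (by omega) (by omega)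
              (Bd_mul (Bd_sub hj1 (Bd_evalA hj1)) (Bd_sub hj2 (Bd_evalX hj2)))
          have hSb : Bd (m + 3) (m + 2) S := by
            have := Bd_divX hS hsum
            exact Bd_mono (le_refl _) (by omega) this
          rw [hQ]
          have hx1 : Bd 0 1 (1 + xR) := Bd_add (Bd_mono (le_refl 0) (by omega) Bd_one) Bd_x
          have ha1 : Bd 1 0 (1 + aR) := Bd_add (Bd_mono (by omega) (le_refl 0) Bd_one) Bd_a
          have ha2 : Bd 2 0 ((1 + aR) ^ 2) := by rw [sq]; exact Bd_mul ha1 ha1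
          have t1 : Bd (m + 3) (m + 3) ((1 + xR) * (1 + aR) ^ 2 * D) :=
            Bd_mono (by omega) (by omega) (Bd_mul (Bd_mul hx1 ha2) hDb)
          have t2 : Bd (m + 3) (m + 3) ((1 + xR) * aR * Q (m + 1)) :=
            Bd_mono (by omega) (by omega) (Bd_mul (Bd_mul hx1 Bd_a) hQm)
          have t3 : Bd (m + 3) (m + 3) ((1 + xR) * S) :=
            Bd_mono (by omega) (by omega) (Bd_mul hx1 hSb)
          exact Bd_add (Bd_add t1 t2) t3
  exact fun n => key n
end
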